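/- Fix an integer n ≥ 1 and let φ be a C¹ function on [0,1] whose support is contained in the open interval (0,1); write g = φ′. Then for all integers 0 ≤ j ≤ n and 1 ≤ j′ ≤ n, the quantity 𝒲_{j,j′} := √n·Σ_{x=1}^n φ_{j′}(x)·ψ_j(x−1)·g(u_x) satisfies 𝒲_{j,j′} = −(n/2)^{1/2}·(1 − δ_{0,j}/2)^{1/2}·cos(πk_j/2)·[ ĝ_{n,o}(j−j′) − ĝ_{n,o}(j+j′) ] − (n/2)^{1/2}·sin(πk_j/2)·[ ĝ_{n,e}(j+j′) − ĝ_{n,e}(j−j′) ]. -/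

import Mathlib

open Real

noncomputable section

/-- Discrete Neumann eigenfunctions
`ψ_j(x) = ((2 − δ_{0,j})/(n+1))^{1/2} cos(πj(2x+1)/(2(n+1)))`. -/
def psiN (n j x : ℕ) : ℝ :=
  Real.sqrt ((2 - (if j = 0 then (1:ℝ) else 0)) / ((n : ℝ) + 1))
    * Real.cos (Real.pi * (j : ℝ) * (2 * (x : ℝ) + 1) / (2 * ((n : ℝ) + 1)))

/-- Discrete Dirichlet eigenfunctions `φ_j(x) = (2/(n+1))^{1/2} sin(πjx/(n+1))`. -/
def phiD (n j x : ℕ) : ℝ :=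
  Real.sqrt (2 / ((n : ℝ) + 1)) * Real.sin (Real.pi * (j : ℝ) * (x : ℝ) / ((n : ℝ) + 1))

/-- `γ_j = 2 sin(πj/(2(n+1)))`. -/
def gam (n j : ℕ) : ℝ := 2 * Real.sin (Real.pi * (j : ℝ) / (2 * ((n : ℝ) + 1)))

/-- Discrete odd Fourier transform `ĝ_{n,o}(j) = (√2/(n+1)) ∑_{x=1}^n sin(πj u_x) g(u_x)`. -/
def hatO (n : ℕ) (g : ℝ → ℝ) (j : ℤ) : ℝ :=
  Real.sqrt 2 / ((n : ℝ) + 1) *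
    ∑ x ∈ Finset.Icc 1 n,
      Real.sin (Real.pi * (j : ℝ) * ((x : ℝ) / ((n : ℝ) + 1))) * g ((x : ℝ) / ((n : ℝ) + 1))

/-- Discrete even Fourier transform `ĝ_{n,e}(j) = (√2/(n+1)) ∑_{x=0}^n cos(πj u_x) g(u_x)`. -/
def hatE (n : ℕ) (g : ℝ → ℝ) (j : ℤ) : ℝ :=
  Real.sqrt 2 / ((n : ℝ) + 1) *
    ∑ x ∈ Finset.range (n + 1),
      Real.cos (Real.pi * (j : ℝ) * ((x : ℝ) / ((n : ℝ) + 1))) * g ((x : ℝ) / ((n : ℝ) + 1))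

set_option linter.unusedVariables false in
lemma key_term (n j j' x : ℕ) (hx : 1 ≤ x) :
    Real.sqrt (n : ℝ) * (phiD n j' x * psiN n j (x - 1)) =
      (Real.sqrt ((n:ℝ)/2) * Real.sqrt (1 - (if j = 0 then (1:ℝ) else 0)/2)
          * Real.cos (Real.pi * ((j:ℝ)/((n:ℝ)+1)) / 2) * (Real.sqrt 2 / ((n:ℝ)+1))) *
        (Real.sin (Real.pi * ((j:ℝ) + (j':ℝ)) * ((x:ℝ)/((n:ℝ)+1)))
          - Real.sin (Real.pi * ((j:ℝ) - (j':ℝ)) * ((x:ℝ)/((n:ℝ)+1))))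
      + (Real.sqrt ((n:ℝ)/2) * Real.sin (Real.pi * ((j:ℝ)/((n:ℝ)+1)) / 2)
          * (Real.sqrt 2 / ((n:ℝ)+1))) *
        (Real.cos (Real.pi * ((j:ℝ) - (j':ℝ)) * ((x:ℝ)/((n:ℝ)+1)))
          - Real.cos (Real.pi * ((j:ℝ) + (j':ℝ)) * ((x:ℝ)/((n:ℝ)+1)))) := by
  have hx' : ((x - 1 : ℕ) : ℝ) = (x:ℝ) - 1 := by
    rw [Nat.cast_sub hx]; norm_num
  unfold phiD psiN
  rw [hx']
  have hN : (0:ℝ) < (n:ℝ) + 1 := by positivity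
  set N : ℝ := (n:ℝ) + 1 with hNdef
  set A : ℝ := Real.pi * (j:ℝ) * (x:ℝ) / N with hA
  set B : ℝ := Real.pi * (j':ℝ) * (x:ℝ) / N with hB
  set θ : ℝ := Real.pi * ((j:ℝ)/N) / 2 with hθ
  have e0 : Real.pi * (j:ℝ) * (2 * ((x:ℝ) - 1) + 1) / (2 * N) = A - θ := by
    rw [hA, hθ]; field_simp; ring
  have e1 : Real.pi * ((j:ℝ) + (j':ℝ)) * ((x:ℝ)/N) = A + B := by
    rw [hA, hB]; field_simp
  have e2 : Real.pi * ((j:ℝ) - (j':ℝ)) * ((x:ℝ)/N) = A - B := by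
    rw [hA, hB]; field_simp
  rw [e0, e1, e2]
  rw [Real.cos_sub A θ, Real.sin_add, Real.sin_sub, Real.cos_add, Real.cos_sub A B]
  by_cases hj0 : j = 0
  · subst hj0
    simp only [reduceIte]
    have hθ0 : θ = 0 := by rw [hθ]; norm_num
    have hA0 : A = 0 := by rw [hA]; norm_num
    rw [hθ0, hA0]
    simp only [Real.sin_zero, Real.cos_zero]
    rw [show ((2:ℝ) - 1)/N = 1/N from by norm_num,
        show (1:ℝ) - 1/2 = 1/2 from by norm_num]
    have hq1 : Real.sqrt (2/N) * Real.sqrt (1/N) = Real.sqrt 2 / N := by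
      rw [← Real.sqrt_mul (by positivity),
        show (2/N)*((1:ℝ)/N) = 2/(N*N) from by rw [div_mul_div_comm, mul_one],
        Real.sqrt_div (by norm_num), Real.sqrt_mul_self hN.le]
    have hq2 : Real.sqrt ((n:ℝ)/2) * Real.sqrt (1/2) = Real.sqrt (n:ℝ) / 2 := by
      rw [← Real.sqrt_mul (by positivity), show ((n:ℝ)/2)*(1/2) = (n:ℝ)/4 by ring,
        Real.sqrt_div (by positivity), show Real.sqrt 4 = 2 from by
          rw [show (4:ℝ) = 2^2 by norm_num, Real.sqrt_sq (by norm_num)]]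
    linear_combination (Real.sqrt (n:ℝ) * Real.sin B) * hq1
      - (2*Real.sqrt 2/N*Real.sin B) * hq2
  · simp only [if_neg hj0, sub_zero]
    rw [show (1:ℝ) - 0/2 = 1 from by norm_num, Real.sqrt_one]
    have hs2 : Real.sqrt (2/N) * Real.sqrt (2/N) = 2/N :=
      Real.mul_self_sqrt (by positivity)
    have hs3 : Real.sqrt ((n:ℝ)/2) * Real.sqrt 2 = Real.sqrt (n:ℝ) := by
      rw [← Real.sqrt_mul (by positivity)]; norm_num
    linear_combination (Real.sqrt (n:ℝ) * Real.sin B * (Real.cos A * Real.cos θ + Real.sin A * Real.sin θ)) * hs2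
      - (2/N * (Real.cos A * Real.cos θ + Real.sin A * Real.sin θ) * Real.sin B) * hs3


/-- Explicit computation of the mixed sum `𝒲_{j,j′}` in terms of
the discrete Fourier transforms of `g = φ′`. -/
theorem W_formula (n : ℕ) (hn : 1 ≤ n) (φ : ℝ → ℝ) (hφ : ContDiff ℝ 1 φ)
    (hsupp : Function.support φ ⊆ Set.Ioo (0:ℝ) 1)
    (j j' : ℕ) (hj : j ≤ n) (hj'1 : 1 ≤ j') (hj' : j' ≤ n) :
    Real.sqrt (n : ℝ) *
        (∑ x ∈ Finset.Icc 1 n,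
          phiD n j' x * psiN n j (x - 1) * deriv φ ((x : ℝ) / ((n : ℝ) + 1)))
      = -(Real.sqrt ((n : ℝ) / 2)
            * Real.sqrt (1 - (if j = 0 then (1:ℝ) else 0) / 2)
            * Real.cos (Real.pi * ((j : ℝ) / ((n : ℝ) + 1)) / 2)
            * (hatO n (deriv φ) ((j : ℤ) - (j' : ℤ)) - hatO n (deriv φ) ((j : ℤ) + (j' : ℤ))))
        - Real.sqrt ((n : ℝ) / 2)
            * Real.sin (Real.pi * ((j : ℝ) / ((n : ℝ) + 1)) / 2)
            * (hatE n (deriv φ) ((j : ℤ) + (j' : ℤ)) - hatE n (deriv φ) ((j : ℤ) - (j' : ℤ))) := by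

  set g := deriv φ with hg
  set N : ℝ := (n:ℝ) + 1 with hNdef
  have h0 : (0:ℕ) ∉ Finset.Icc 1 n := by simp
  have hrange : Finset.range (n+1) = insert 0 (Finset.Icc 1 n) := by
    ext y
    simp only [Finset.mem_range, Finset.mem_insert, Finset.mem_Icc]
    omega
  set S1 : ℝ := ∑ x ∈ Finset.Icc 1 n,
    Real.sin (Real.pi * ((j:ℝ) + (j':ℝ)) * ((x:ℝ)/N)) * g ((x:ℝ)/N) with hS1
  set S2 : ℝ := ∑ x ∈ Finset.Icc 1 n,
    Real.sin (Real.pi * ((j:ℝ) - (j':ℝ)) * ((x:ℝ)/N)) * g ((x:ℝ)/N) with hS2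
  set S3 : ℝ := ∑ x ∈ Finset.Icc 1 n,
    Real.cos (Real.pi * ((j:ℝ) - (j':ℝ)) * ((x:ℝ)/N)) * g ((x:ℝ)/N) with hS3
  set S4 : ℝ := ∑ x ∈ Finset.Icc 1 n,
    Real.cos (Real.pi * ((j:ℝ) + (j':ℝ)) * ((x:ℝ)/N)) * g ((x:ℝ)/N) with hS4
  have hOp : hatO n g ((j:ℤ) + (j':ℤ)) = Real.sqrt 2 / N * S1 := by
    rw [hatO, hS1]
    congr 1
    apply Finset.sum_congr rfl
    intro x _
    push_cast
    rw [hNdef]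
  have hOm : hatO n g ((j:ℤ) - (j':ℤ)) = Real.sqrt 2 / N * S2 := by
    rw [hatO, hS2]
    congr 1
    apply Finset.sum_congr rfl
    intro x _
    push_cast
    rw [hNdef]
  have hEp : hatE n g ((j:ℤ) + (j':ℤ)) = Real.sqrt 2 / N * (g 0 + S4) := by
    rw [hatE, hrange, Finset.sum_insert h0, hS4]
    congr 1
    · norm_num [hNdef]
  have hEm : hatE n g ((j:ℤ) - (j':ℤ)) = Real.sqrt 2 / N * (g 0 + S3) := by
    rw [hatE, hrange, Finset.sum_insert h0, hS3]
    congr 1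
    · norm_num [hNdef]
  rw [hOp, hOm, hEp, hEm, Finset.mul_sum]
  have hmain : ∑ x ∈ Finset.Icc 1 n,
      Real.sqrt (n:ℝ) * (phiD n j' x * psiN n j (x - 1) * g ((x:ℝ)/N)) =
      (Real.sqrt ((n:ℝ)/2) * Real.sqrt (1 - (if j = 0 then (1:ℝ) else 0)/2)
          * Real.cos (Real.pi * ((j:ℝ)/N) / 2) * (Real.sqrt 2 / N)) * (S1 - S2)
      + (Real.sqrt ((n:ℝ)/2) * Real.sin (Real.pi * ((j:ℝ)/N) / 2)
          * (Real.sqrt 2 / N)) * (S3 - S4) := by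
    rw [hS1, hS2, hS3, hS4, ← Finset.sum_sub_distrib, ← Finset.sum_sub_distrib,
      Finset.mul_sum, Finset.mul_sum, ← Finset.sum_add_distrib]
    apply Finset.sum_congr rfl
    intro x hx
    have hx1 : 1 ≤ x := (Finset.mem_Icc.mp hx).1
    have hk := key_term n j j' x hx1
    linear_combination (g ((x:ℝ)/N)) * hk
  rw [hmain]
  ring
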